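/- With equal on-rates αᵢ = α and gain constraint (α/β)^n = Kℓ (so β = α (Kℓ)^{-1/n}), the signal-duration term σ₀(n) = n/β² = (1/α²)·n·(Kℓ)^{2/n} satisfies: σ₀ is minimized over positive integers n at n* = Ψ(2 ln(Kℓ)), where Ψ(M) = 1 for M ≤ 1, Ψ(M) = ⌊M⌋ if M > 1 and the fractional part δ_M ≤ f(⌊M⌋), and Ψ(M) = ⌈M⌉ otherwise, with f(k) = k((k+1)ln((k+1)/k) − 1). -/

import Mathlib

noncomputable def f (k : ℝ) : ℝ := k * ((k + 1) * Real.log ((k + 1) / k) - 1)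

noncomputable def Psi (M : ℝ) : ℕ :=
  if M ≤ 1 then 1
  else if Int.fract M ≤ f (⌊M⌋₊ : ℝ) then ⌊M⌋₊ else ⌈M⌉₊

noncomputable def g (M : ℝ) (n : ℕ) : ℝ := Real.log n + M / n

lemma log_succ_lt (x : ℝ) (hx : 1 ≤ x) : Real.log ((x + 1) / x) < 1 / x := by
  have hx0 : 0 < x := by linarith
  have h1 : (0:ℝ) < (x + 1) / x := by positivity
  have h2 : (x + 1) / x ≠ 1 := by
    intro h
    rw [div_eq_one_iff_eq (ne_of_gt hx0)] at h
    linarith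
  have := Real.log_lt_sub_one_of_pos h1 h2
  have : Real.log ((x + 1) / x) < (x + 1) / x - 1 := this
  have heq : (x + 1) / x - 1 = 1 / x := by field_simp; ring
  linarith [heq ▸ this]

lemma lt_log_succ (x : ℝ) (hx : 1 ≤ x) : 1 / (x + 1) < Real.log ((x + 1) / x) := by
  have hx0 : 0 < x := by linarith
  have h1 : (0:ℝ) < x / (x + 1) := by positivity
  have h2 : x / (x + 1) ≠ 1 := by
    intro h
    rw [div_eq_one_iff_eq (by positivity)] at h
    linarith
  have h3 := Real.log_lt_sub_one_of_pos h1 h2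
  have heq : Real.log (x / (x + 1)) = - Real.log ((x + 1) / x) := by
    rw [← Real.log_inv]
    congr 1
    field_simp
  rw [heq] at h3
  have heq2 : x / (x + 1) - 1 = -(1 / (x + 1)) := by field_simp; ring
  rw [heq2] at h3
  linarith

/-- h(x) = x(x+1)log((x+1)/x) > x -/
lemma h_gt (x : ℝ) (hx : 1 ≤ x) : x < x * (x + 1) * Real.log ((x + 1) / x) := by
  have hx0 : 0 < x := by linarith
  have := lt_log_succ x hx
  have h2 : x * (x + 1) * (1 / (x + 1)) < x * (x + 1) * Real.log ((x + 1) / x) := by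
    apply mul_lt_mul_of_pos_left this (by positivity)
  have heq : x * (x + 1) * (1 / (x + 1)) = x := by field_simp
  linarith [heq ▸ h2]

/-- h(x) < x + 1 -/
lemma h_lt (x : ℝ) (hx : 1 ≤ x) : x * (x + 1) * Real.log ((x + 1) / x) < x + 1 := by
  have hx0 : 0 < x := by linarith
  have := log_succ_lt x hx
  have h2 : x * (x + 1) * Real.log ((x + 1) / x) < x * (x + 1) * (1 / x) := by
    apply mul_lt_mul_of_pos_left this (by positivity)
  have heq : x * (x + 1) * (1 / x) = x + 1 := by field_simp
  linarith [heq ▸ h2]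

lemma g_step (M : ℝ) (m : ℕ) (hm : 1 ≤ m) :
    g M (m + 1) - g M m =
      Real.log (((m : ℝ) + 1) / m) - M / ((m : ℝ) * (m + 1)) := by
  have hm0 : (0:ℝ) < m := by exact_mod_cast hm
  unfold g
  rw [Real.log_div (by positivity) (ne_of_gt hm0)]
  push_cast
  field_simp
  ring

lemma step_up (M : ℝ) (m : ℕ) (hm : 1 ≤ m)
    (h : M ≤ (m : ℝ) * (m + 1) * Real.log (((m : ℝ) + 1) / m)) :
    g M m ≤ g M (m + 1) := by
  have hm0 : (0:ℝ) < m := by exact_mod_cast hm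
  have hstep := g_step M m hm
  have hpos : (0:ℝ) < (m : ℝ) * (m + 1) := by positivity
  have : M / ((m : ℝ) * (m + 1)) ≤ Real.log (((m : ℝ) + 1) / m) := by
    rw [div_le_iff₀ hpos]
    linarith [h]
  linarith [hstep]

lemma step_down (M : ℝ) (m : ℕ) (hm : 1 ≤ m)
    (h : (m : ℝ) * (m + 1) * Real.log (((m : ℝ) + 1) / m) ≤ M) :
    g M (m + 1) ≤ g M m := by
  have hm0 : (0:ℝ) < m := by exact_mod_cast hm
  have hstep := g_step M m hm
  have hpos : (0:ℝ) < (m : ℝ) * (m + 1) := by positivity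
  have : Real.log (((m : ℝ) + 1) / m) ≤ M / ((m : ℝ) * (m + 1)) := by
    rw [le_div_iff₀ hpos]
    linarith [h]
  linarith [hstep]

lemma min_of_steps (M : ℝ) (t : ℕ) (ht : 1 ≤ t)
    (hdec : ∀ m, 1 ≤ m → m < t → g M (m + 1) ≤ g M m)
    (hinc : ∀ m, t ≤ m → 1 ≤ m → g M m ≤ g M (m + 1)) :
    ∀ n, 1 ≤ n → g M t ≤ g M n := by
  have up : ∀ d, g M t ≤ g M (t + d) := by
    intro d
    induction d with
    | zero => simp
    | succ d ih =>
        calc g M t ≤ g M (t + d) := ih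
        _ ≤ g M (t + d + 1) := hinc (t + d) (by omega) (by omega)
  have down : ∀ d n, n + d = t → 1 ≤ n → g M t ≤ g M n := by
    intro d
    induction d with
    | zero => intro n h _; simp [← h]
    | succ d ih =>
        intro n h h1
        calc g M t ≤ g M (n + 1) := ih (n + 1) (by omega) (by omega)
        _ ≤ g M n := hdec n h1 (by omega)
  intro n hn
  rcases le_or_gt t n with h | h
  · obtain ⟨d, rfl⟩ := Nat.exists_eq_add_of_le h
    exact up d
  · exact down (t - n) n (by omega) hn

lemma psi_min (M : ℝ) : ∀ n, 1 ≤ n → g M (Psi M) ≤ g M n := by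
  unfold Psi
  split_ifs with h1 h2
  · -- M ≤ 1, Psi = 1
    apply min_of_steps M 1 le_rfl
    · intro m hm hlt; omega
    · intro m _ hm
      apply step_up M m hm
      have hm1 : (1:ℝ) ≤ (m:ℝ) := by exact_mod_cast hm
      have := h_gt (m:ℝ) hm1
      linarith
  · -- 1 < M, fract ≤ f(⌊M⌋₊): t = ⌊M⌋₊
    push_neg at h1
    set k := ⌊M⌋₊ with hk
    have hM0 : (0:ℝ) ≤ M := by linarith
    have hk1 : 1 ≤ k := Nat.le_floor (by exact_mod_cast h1.le)
    have hkM : (k:ℝ) ≤ M := Nat.floor_le hM0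
    have hMk : M < (k:ℝ) + 1 := Nat.lt_floor_add_one M
    have hif : ((⌊M⌋₊ : ℕ) : ℤ) = ⌊M⌋ := by
      rw [← Int.floor_toNat]
      exact Int.toNat_of_nonneg (Int.floor_nonneg.mpr hM0)
    have hfract : Int.fract M = M - (k:ℝ) := by
      rw [Int.fract]
      congr 1
      exact_mod_cast hif.symm
    have hk1R : (1:ℝ) ≤ (k:ℝ) := by exact_mod_cast hk1
    apply min_of_steps M k hk1
    · intro m hm hlt
      apply step_down M m hm
      have hm1R : (1:ℝ) ≤ (m:ℝ) := by exact_mod_cast hm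
      have := h_lt (m:ℝ) hm1R
      have hmk : (m:ℝ) + 1 ≤ (k:ℝ) := by exact_mod_cast hlt
      linarith
    · intro m hkm hm
      apply step_up M m hm
      have hm1R : (1:ℝ) ≤ (m:ℝ) := by exact_mod_cast hm
      rcases eq_or_lt_of_le hkm with rfl | hlt
      · -- m = k : M ≤ h(k) since fract ≤ f(k)
        rw [hfract] at h2
        unfold f at h2
        nlinarith [h2]
      · have := h_gt (m:ℝ) hm1R
        have hkm' : (k:ℝ) + 1 ≤ (m:ℝ) := by exact_mod_cast hlt
        linarith
  · -- 1 < M, fract > f(⌊M⌋₊): t = ⌈M⌉₊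
    push_neg at h1 h2
    set k := ⌊M⌋₊ with hk
    have hM0 : (0:ℝ) ≤ M := by linarith
    have hk1 : 1 ≤ k := Nat.le_floor (by exact_mod_cast h1.le)
    have hkM : (k:ℝ) ≤ M := Nat.floor_le hM0
    have hMk : M < (k:ℝ) + 1 := Nat.lt_floor_add_one M
    have hif : ((⌊M⌋₊ : ℕ) : ℤ) = ⌊M⌋ := by
      rw [← Int.floor_toNat]
      exact Int.toNat_of_nonneg (Int.floor_nonneg.mpr hM0)
    have hfract : Int.fract M = M - (k:ℝ) := by
      rw [Int.fract]
      congr 1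
      exact_mod_cast hif.symm
    have hk1R : (1:ℝ) ≤ (k:ℝ) := by exact_mod_cast hk1
    have hfk : 0 < f (k:ℝ) := by
      unfold f
      have := lt_log_succ (k:ℝ) hk1R
      have h2' : ((k:ℝ) + 1) * (1 / ((k:ℝ) + 1)) < ((k:ℝ) + 1) * Real.log (((k:ℝ) + 1) / k) := by
        apply mul_lt_mul_of_pos_left this (by positivity)
      have heq : ((k:ℝ) + 1) * (1 / ((k:ℝ) + 1)) = 1 := by field_simp
      nlinarith
    have hMgtk : (k:ℝ) < M := by rw [hfract] at h2; linarith
    have hceil : ⌈M⌉₊ = k + 1 := by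
      rw [Nat.ceil_eq_iff (by omega)]
      constructor
      · simpa using hMgtk
      · push_cast; linarith
    rw [hceil]
    apply min_of_steps M (k + 1) (by omega)
    · intro m hm hlt
      apply step_down M m hm
      have hm1R : (1:ℝ) ≤ (m:ℝ) := by exact_mod_cast hm
      rcases eq_or_lt_of_le (Nat.lt_succ_iff.mp hlt) with rfl | hlt'
      · -- m = k: h(k) ≤ M since f(k) < fract
        rw [hfract] at h2
        unfold f at h2
        nlinarith [h2]
      · have := h_lt (m:ℝ) hm1R
        have hmk : (m:ℝ) + 1 ≤ (k:ℝ) := by exact_mod_cast hlt'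
        linarith
    · intro m hkm hm
      apply step_up M m hm
      have hm1R : (1:ℝ) ≤ (m:ℝ) := by exact_mod_cast hm
      have := h_gt (m:ℝ) hm1R
      have hkm' : (k:ℝ) + 1 ≤ (m:ℝ) := by exact_mod_cast hkm
      linarith

theorem optimal_length (K ℓ α : ℝ) (hK : 0 < K) (hℓ : 0 < ℓ) (hα : 0 < α) :
    ∀ n : ℕ, 1 ≤ n →
      (1 / α^2) * (Psi (2 * Real.log (K * ℓ)) : ℝ) *
        (K * ℓ) ^ ((2:ℝ) / (Psi (2 * Real.log (K * ℓ)) : ℝ)) ≤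
      (1 / α^2) * (n : ℝ) * (K * ℓ) ^ ((2:ℝ) / (n : ℝ)) := by
  set M := 2 * Real.log (K * ℓ) with hM
  have hKl : 0 < K * ℓ := by positivity
  have key : ∀ m : ℕ, 1 ≤ m →
      (m : ℝ) * (K * ℓ) ^ ((2:ℝ) / (m : ℝ)) = Real.exp (g M m) := by
    intro m hm
    have hm0 : (0:ℝ) < m := by exact_mod_cast hm
    rw [Real.rpow_def_of_pos hKl]
    unfold g
    rw [Real.exp_add, Real.exp_log hm0]
    congr 2
    rw [hM]
    ring
  have hpsi1 : 1 ≤ Psi M := by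
    unfold Psi
    split_ifs with h1 h2
    · exact le_rfl
    · exact Nat.le_floor (by push_neg at h1; exact_mod_cast h1.le)
    · push_neg at h1
      exact Nat.one_le_ceil_iff.mpr (by linarith)
  intro n hn
  rw [mul_assoc, mul_assoc, key _ hpsi1, key _ hn]
  apply mul_le_mul_of_nonneg_left _ (by positivity)
  exact Real.exp_le_exp.mpr (psi_min M n hn)
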